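/- Let A, B be directed graphs on a finite vertex set V such that A ∩ Bᵀ = I and A ∪ Bᵀ = V × V. Then for any weight function ω : V → ℝ≥0, there exists a vertex v such that ω((AB ∪ BA)(v)) ≥ ω(A(v)) + ω(B(v)) − ω(v). -/

import Mathlib

open Finset
open scoped Classical
noncomputable section

/-- Out-neighbourhood of `v` in the digraph/relation `A`. -/
def outs {V : Type} [Fintype V] (A : V → V → Prop) (v : V) : Finset V :=
  Finset.univ.filter (fun u => A v u)

/-- In-neighbourhood of `v` in the digraph/relation `A`. -/
def ins {V : Type} [Fintype V] (A : V → V → Prop) (v : V) : Finset V :=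
  Finset.univ.filter (fun u => A u v)

/-- Second out-neighbourhood: `(⋃_{u ∈ N⁺(v)} N⁺(u)) \ N⁺(v)`. -/
def souts {V : Type} [Fintype V] (A : V → V → Prop) (v : V) : Finset V :=
  (Finset.univ.filter (fun w => ∃ u, A v u ∧ A u w)) \ outs A v

/-- Relational product `AB`. -/
def rprod {V : Type} (A B : V → V → Prop) : V → V → Prop :=
  fun u v => ∃ w, A u w ∧ B w v

/-- Transpose of a relation. -/
def tr {V : Type} (A : V → V → Prop) : V → V → Prop := fun u v => A v u

/-- Weight of a finite set of vertices. -/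
def wt {V : Type} {M : Type} [AddCommMonoid M] (ω : V → M) (S : Finset V) : M :=
  ∑ x ∈ S, ω x
namespace SNCAux

variable {V : Type} [Fintype V]

/-- Edge payoff. -/
noncomputable def ep (A : V → V → Prop) (ω : V → ℝ) (a u : V) : ℝ :=
  if A a u then ω a * ω u else 0

/-- Weight of an ordering (sum of `ep` over ordered pairs). -/
noncomputable def Wt (A : V → V → Prop) (ω : V → ℝ) : List V → ℝ
  | [] => 0
  | a :: l => (l.map (ep A ω a)).sum + Wt A ω l

noncomputable def gg (A : V → V → Prop) (a u : V) : ℝ :=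
  (if A a u then (1:ℝ) else 0) - (if A u a then (1:ℝ) else 0)

def CrelL (A : V → V → Prop) (m : List V) (x w : V) : Prop :=
  ¬ A x w ∧ (∀ u ∈ m, A x u → A w u) ∧ (∀ u ∈ m, A u w → A u x)

lemma Wt_cons (A : V → V → Prop) (ω : V → ℝ) (a : V) (l : List V) :
    Wt A ω (a :: l) = (l.map (ep A ω a)).sum + Wt A ω l := rfl

lemma mapsum_congr {α : Type*} (l : List α) (f g : α → ℝ) (h : ∀ a ∈ l, f a = g a) :
    (l.map f).sum = (l.map g).sum := by
  induction l with
  | nil => simp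
  | cons a t ih =>
    simp only [List.map_cons, List.sum_cons]
    rw [h a (by simp), ih (fun b hb => h b (by simp [hb]))]

lemma mapsum_add {α : Type*} (l : List α) (f g : α → ℝ) :
    (l.map (fun u => f u + g u)).sum = (l.map f).sum + (l.map g).sum := by
  induction l with
  | nil => simp
  | cons a t ih => simp [ih]; ring

lemma mapsum_sub {α : Type*} (l : List α) (f g : α → ℝ) :
    (l.map (fun u => f u - g u)).sum = (l.map f).sum - (l.map g).sum := by
  induction l with
  | nil => simp
  | cons a t ih => simp [ih]; ring

lemma mapsum_mul {α : Type*} (l : List α) (c : ℝ) (f : α → ℝ) :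
    (l.map (fun u => c * f u)).sum = c * (l.map f).sum := by
  induction l with
  | nil => simp
  | cons a t ih => simp [ih]; ring

lemma Wt_append (A : V → V → Prop) (ω : V → ℝ) (P R : List V) :
    Wt A ω (P ++ R) = Wt A ω P + (P.map (fun p => (R.map (ep A ω p)).sum)).sum + Wt A ω R := by
  induction P with
  | nil => simp [Wt]
  | cons a t ih =>
    simp only [List.cons_append, Wt_cons, List.map_append, List.sum_append, List.map_cons,
      List.sum_cons, ih]
    ring

lemma ep_sub (A : V → V → Prop) (ω : V → ℝ) (a u : V) :
    ep A ω a u - ep A ω u a = ω a * (ω u * gg A a u) := by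
  unfold ep gg
  split_ifs <;> ring

/-- first element of a list satisfying a predicate, with decomposition. -/
lemma exists_first {α : Type*} (p : α → Prop) :
    ∀ (l : List α), (∃ u ∈ l, p u) →
      ∃ P w T, l = P ++ w :: T ∧ p w ∧ ∀ u ∈ P, ¬ p u := by
  intro l
  induction l with
  | nil => rintro ⟨u, hu, -⟩; simp at hu
  | cons a t ih =>
    intro h
    by_cases ha : p a
    · exact ⟨[], a, t, by simp, ha, by simp⟩
    · obtain ⟨u, hu, hpu⟩ := h
      have hut : u ∈ t := by
        rcases List.mem_cons.1 hu with rfl | h'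
        · exact absurd hpu ha
        · exact h'
      obtain ⟨P, w, T, hdec, hw, hP⟩ := ih ⟨u, hut, hpu⟩
      refine ⟨a :: P, w, T, by simp [hdec], hw, ?_⟩
      intro v hv
      rcases List.mem_cons.1 hv with rfl | h'
      · exact ha
      · exact hP v h'


lemma indic_mono {p q : Prop} (h : p → q) :
    (if p then (1:ℝ) else 0) ≤ (if q then (1:ℝ) else 0) := by
  split_ifs with h1 h2 <;> norm_num
  exact h2 (h h1)

lemma ite_w_mono {p q : Prop} {c : ℝ} (hc : 0 ≤ c) (h : p → q) :
    (if p then c else 0) ≤ (if q then c else 0) := by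
  split_ifs with h1 h2 <;> first | rfl | exact hc | exact absurd (h h1) h2

lemma cre_mono {V : Type} (A : V → V → Prop) {m m' : List V} (hsub : ∀ v ∈ m', v ∈ m)
    {x w : V} (h : CrelL A m x w) : CrelL A m' x w :=
  ⟨h.1, fun u hu => h.2.1 u (hsub u hu), fun u hu => h.2.2 u (hsub u hu)⟩

/-- Key combinatorial lemma: for any maximal ("median") order ending at `x`,
the vertex `x` satisfies the second-neighbourhood inequality. -/
lemma key (A : V → V → Prop) (ω : V → ℝ) (hA : ∀ v, A v v) :
    ∀ (N : ℕ) (l : List V) (x : V), l.length ≤ N →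
    (∀ v ∈ l ++ [x], 0 < ω v) →
    (∀ m, m.Perm (l ++ [x]) → Wt A ω m ≤ Wt A ω (l ++ [x])) →
    (l.map (fun u => ω u * gg A x u)).sum
      + (l.map (fun u => if CrelL A (l ++ [x]) x u then ω u else 0)).sum ≤ 0 := by
  intro N
  induction N with
  | zero =>
    intro l x hlen _ _
    have hl : l = [] := List.length_eq_zero_iff.1 (Nat.le_zero.1 hlen)
    subst hl; simp
  | succ N ih =>
    intro l x hlen hpos hmax
    by_cases hC : ∃ u ∈ l, CrelL A (l ++ [x]) x u
    · obtain ⟨P, w₀, T, hdec, hw₀C, hPfree⟩ := exists_first _ l hC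
      subst hdec
      have hw₀mem : w₀ ∈ (P ++ w₀ :: T) ++ [x] := by simp
      have hw₀pos : 0 < ω w₀ := hpos w₀ hw₀mem
      have hAw₀x : A w₀ x := hw₀C.2.2 w₀ hw₀mem (hA w₀)
      have hggw₀ : gg A x w₀ = -1 := by
        unfold gg; rw [if_neg hw₀C.1, if_pos hAw₀x]; ring
      cases P with
      | nil =>
        -- deletion case: l = w₀ :: T with w₀ ∈ C
        simp only [List.nil_append] at hw₀C hw₀mem hlen hpos hmax hPfree ⊢
        have hcons : (w₀ :: T) ++ [x] = w₀ :: (T ++ [x]) := by simp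
        have hmax' : ∀ m, m.Perm (T ++ [x]) → Wt A ω m ≤ Wt A ω (T ++ [x]) := by
          intro m hm
          have h := hmax (w₀ :: m) (by rw [hcons]; exact hm.cons w₀)
          rw [hcons, Wt_cons, Wt_cons] at h
          have hs : (m.map (ep A ω w₀)).sum = ((T ++ [x]).map (ep A ω w₀)).sum :=
            (hm.map _).sum_eq
          linarith
        have hT := ih T x (by simpa using Nat.succ_le_succ_iff.mp (by simpa using hlen))
          (fun v hv => hpos v (by rw [hcons]; exact List.mem_cons_of_mem _ hv)) hmax'
        have hmono : (T.map (fun u => if CrelL A ((w₀ :: T) ++ [x]) x u then ω u else 0)).sum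
            ≤ (T.map (fun u => if CrelL A (T ++ [x]) x u then ω u else 0)).sum := by
          apply List.sum_le_sum
          intro u hu
          exact ite_w_mono (le_of_lt (hpos u (by rw [hcons]; exact List.mem_cons_of_mem _ (by simp [hu]))))
            (cre_mono A (by intro v hv; rw [hcons]; exact List.mem_cons_of_mem _ hv))
        simp only [List.map_cons, List.sum_cons]
        rw [if_pos hw₀C, hggw₀]
        linarith
      | cons y P' =>
        -- split case: P = y :: P' nonempty
        set P := y :: P' with hPdef
        set R := T ++ [x] with hRdef
        have hassoc : (P ++ w₀ :: T) ++ [x] = P ++ (w₀ :: R) := by simp [hRdef]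
        have hmemM : ∀ v ∈ (w₀ :: T) ++ [x], v ∈ (P ++ w₀ :: T) ++ [x] := by
          intro v hv; simp at hv ⊢; tauto
        have hlen₂ : (w₀ :: T).length ≤ N := by
          simp only [List.length_append, List.length_cons, hPdef] at hlen ⊢
          omega
        have hmax₂ : ∀ m, m.Perm ((w₀ :: T) ++ [x]) → Wt A ω m ≤ Wt A ω ((w₀ :: T) ++ [x]) := by
          intro m hm
          have hassoc2 : (P ++ w₀ :: T) ++ [x] = P ++ ((w₀ :: T) ++ [x]) := by simp
          have h := hmax (P ++ m) (by rw [hassoc2]; exact hm.append_left P)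
          rw [hassoc2, Wt_append, Wt_append] at h
          have hcross : (P.map (fun p => (m.map (ep A ω p)).sum)).sum
              = (P.map (fun p => (((w₀ :: T) ++ [x]).map (ep A ω p)).sum)).sum := by
            apply mapsum_congr; intro p _; exact (hm.map _).sum_eq
          linarith [hcross ▸ h]
        have hIH := ih (w₀ :: T) x hlen₂
          (fun v hv => hpos v (hmemM v hv)) hmax₂
        -- prefix exchange: move w₀ to the front
        have halt := hmax (w₀ :: (P ++ R)) (by rw [hassoc]; exact List.perm_middle.symm)
        have hexp : (P.map (fun u => ep A ω w₀ u)).sum ≤ (P.map (fun u => ep A ω u w₀)).sum := by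
          rw [hassoc] at halt
          have eL : Wt A ω (w₀ :: (P ++ R)) = (P.map (ep A ω w₀)).sum
              + (R.map (ep A ω w₀)).sum
              + (Wt A ω P + (P.map (fun p => (R.map (ep A ω p)).sum)).sum + Wt A ω R) := by
            rw [Wt_cons, List.map_append, List.sum_append, Wt_append]
          have hinner : (P.map (fun p => ((w₀ :: R).map (ep A ω p)).sum)).sum
              = (P.map (fun p => ep A ω p w₀)).sum
                + (P.map (fun p => (R.map (ep A ω p)).sum)).sum := by
            rw [← mapsum_add]
            apply mapsum_congr; intro p _; simp
          have eR : Wt A ω (P ++ w₀ :: R) = Wt A ω P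
              + ((P.map (fun p => ep A ω p w₀)).sum
                + (P.map (fun p => (R.map (ep A ω p)).sum)).sum)
              + ((R.map (ep A ω w₀)).sum + Wt A ω R) := by
            rw [Wt_append, hinner]
            simp only [Wt_cons]
          rw [eL, eR] at halt
          linarith
        have hPw : (P.map (fun u => ω u * gg A w₀ u)).sum ≤ 0 := by
          have h2 : (P.map (fun u => ep A ω w₀ u - ep A ω u w₀)).sum ≤ 0 := by
            rw [mapsum_sub]; linarith
          have h3 : (P.map (fun u => ω w₀ * (ω u * gg A w₀ u))).sum ≤ 0 := by
            calc (P.map (fun u => ω w₀ * (ω u * gg A w₀ u))).sum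
                = (P.map (fun u => ep A ω w₀ u - ep A ω u w₀)).sum := by
                  apply mapsum_congr; intro a _; rw [ep_sub]
              _ ≤ 0 := h2
          rw [mapsum_mul] at h3
          nlinarith
        have hPx : (P.map (fun u => ω u * gg A x u)).sum
            ≤ (P.map (fun u => ω u * gg A w₀ u)).sum := by
          apply List.sum_le_sum
          intro u hu
          have humem : u ∈ (P ++ w₀ :: T) ++ [x] := by simp at hu ⊢; tauto
          have hgle : gg A x u ≤ gg A w₀ u := by
            unfold gg
            have ha := hw₀C.2.1 u humem
            have hb := hw₀C.2.2 u humem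
            exact sub_le_sub (indic_mono ha) (indic_mono hb)
          exact mul_le_mul_of_nonneg_left hgle (le_of_lt (hpos u humem))
        -- assemble
        have hsplit : ∀ f : V → ℝ, ((P ++ w₀ :: T).map f).sum = (P.map f).sum + ((w₀ :: T).map f).sum := by
          intro f; rw [List.map_append, List.sum_append]
        rw [hsplit, hsplit]
        have hPzero : (P.map (fun u => if CrelL A ((P ++ w₀ :: T) ++ [x]) x u then ω u else 0)).sum = 0 := by
          apply List.sum_eq_zero
          intro r hr
          obtain ⟨u, hu, rfl⟩ := List.mem_map.1 hr
          rw [if_neg (hPfree u hu)]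
        have hmono : ((w₀ :: T).map (fun u => if CrelL A ((P ++ w₀ :: T) ++ [x]) x u then ω u else 0)).sum
            ≤ ((w₀ :: T).map (fun u => if CrelL A ((w₀ :: T) ++ [x]) x u then ω u else 0)).sum := by
          apply List.sum_le_sum
          intro u hu
          exact ite_w_mono (le_of_lt (hpos u (hmemM u (by simp at hu ⊢; tauto))))
            (cre_mono A hmemM)
        rw [hPzero]
        linarith
    · -- no C-element: direct exchange
      push_neg at hC
      have hzero : (l.map (fun u => if CrelL A (l ++ [x]) x u then ω u else 0)).sum = 0 := by
        apply List.sum_eq_zero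
        intro r hr
        obtain ⟨u, hu, rfl⟩ := List.mem_map.1 hr
        simp [hC u hu]
      rw [hzero, add_zero]
      -- compare l ++ [x] with x :: l
      have hperm : (x :: l).Perm (l ++ [x]) := (List.perm_append_singleton x l).symm
      have h := hmax _ hperm
      rw [Wt_cons, Wt_append] at h
      have hsing : (l.map (fun p => (([x] : List V).map (ep A ω p)).sum)).sum
          = (l.map (fun p => ep A ω p x)).sum := by
        apply mapsum_congr; intro a _; simp
      rw [hsing] at h
      simp only [Wt, List.map_nil, List.sum_nil, add_zero] at h
      -- h : (l.map (ep A ω x)).sum + Wt A ω l ≤ Wt A ω l + (l.map (fun p => ep A ω p x)).sum + 0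
      have h2 : (l.map (fun u => ep A ω x u - ep A ω u x)).sum ≤ 0 := by
        rw [mapsum_sub]; linarith
      have h3 : (l.map (fun u => ω x * (ω u * gg A x u))).sum ≤ 0 := by
        calc (l.map (fun u => ω x * (ω u * gg A x u))).sum
            = (l.map (fun u => ep A ω x u - ep A ω u x)).sum := by
              apply mapsum_congr; intro a _; rw [ep_sub]
          _ ≤ 0 := h2
      rw [mapsum_mul] at h3
      have hx : 0 < ω x := hpos x (by simp)
      nlinarith [h3]


def Cfull {V : Type} (A : V → V → Prop) (x w : V) : Prop :=
  ¬ A x w ∧ (∀ u, A x u → A w u) ∧ (∀ u, A u w → A u x)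

lemma posCase [Nonempty V] (A : V → V → Prop) (hA : ∀ v, A v v) (ω : V → ℝ)
    (hω : ∀ v, 0 < ω v) :
    ∃ x : V, (∑ u ∈ Finset.univ.filter (fun u => A x u), ω u)
        + (∑ u ∈ Finset.univ.filter (fun w => Cfull A x w), ω u)
      ≤ ∑ u ∈ Finset.univ.filter (fun u => A u x), ω u := by
  classical
  set l₀ := (Finset.univ : Finset V).toList with hl₀def
  have hl₀ne : l₀ ≠ [] := by
    intro h
    have : (Finset.univ : Finset V) = ∅ := by
      rwa [← Finset.toList_eq_nil]
    exact (Finset.univ_nonempty (α := V)).ne_empty this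
  have hl₀mem : l₀ ∈ l₀.permutations := List.mem_permutations.2 (List.Perm.refl _)
  have hpermsne : l₀.permutations ≠ [] := List.ne_nil_of_mem hl₀mem
  obtain ⟨m, hm⟩ : ∃ m, m ∈ l₀.permutations.argmax (Wt A ω) := by
    cases h : l₀.permutations.argmax (Wt A ω) with
    | none => exact absurd (List.argmax_eq_none.1 h) hpermsne
    | some m => exact ⟨m, Option.mem_def.2 rfl⟩
  have hmperm : m.Perm l₀ := List.mem_permutations.1 (List.argmax_mem hm)
  have hmne : m ≠ [] := by
    intro h
    exact hl₀ne (List.Perm.nil_eq (h ▸ hmperm)).symm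
  obtain ⟨l', x, rfl⟩ : ∃ L b, m = L ++ [b] := by
    rcases List.eq_nil_or_concat m with h | h
    · exact absurd h hmne
    · simpa [List.concat_eq_append] using h
  have hmax : ∀ m', m'.Perm (l' ++ [x]) → Wt A ω m' ≤ Wt A ω (l' ++ [x]) := by
    intro m' h'
    exact List.le_of_mem_argmax (List.mem_permutations.2 (h'.trans hmperm)) hm
  have hpos : ∀ v ∈ l' ++ [x], 0 < ω v := fun v _ => hω v
  have hkey := key A ω hA l'.length l' x le_rfl hpos hmax
  -- convert to Finset sums
  have hnodup : (l' ++ [x]).Nodup := hmperm.nodup_iff.2 (Finset.nodup_toList _)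
  have hl'nodup : l'.Nodup := (List.nodup_append.1 hnodup).1
  have hxl' : x ∉ l' := by
    have := (List.nodup_append.1 hnodup).2.2
    intro hx
    exact this x hx x (by simp) rfl
  have hmem : ∀ u : V, u ∈ l' ++ [x] := fun u => hmperm.mem_iff.2 (by simp [hl₀def])
  have hl'fin : l'.toFinset = Finset.univ.erase x := by
    ext u
    simp only [List.mem_toFinset, Finset.mem_erase, Finset.mem_univ, and_true]
    constructor
    · intro hu
      exact fun h => hxl' (h ▸ hu)
    · intro hne
      rcases List.mem_append.1 (hmem u) with h | h
      · exact h
      · simp at h; exact absurd h hne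
  have hcre : ∀ u, CrelL A (l' ++ [x]) x u ↔ Cfull A x u := by
    intro u
    constructor
    · rintro ⟨h1, h2, h3⟩
      exact ⟨h1, fun v hv => h2 v (hmem v) hv, fun v hv => h3 v (hmem v) hv⟩
    · rintro ⟨h1, h2, h3⟩
      exact ⟨h1, fun v _ hv => h2 v hv, fun v _ hv => h3 v hv⟩
  have hs1 : (l'.map (fun u => ω u * gg A x u)).sum
      = ∑ u ∈ Finset.univ.erase x, ω u * gg A x u := by
    rw [← hl'fin, List.sum_toFinset _ hl'nodup]
  have hs2 : (l'.map (fun u => if CrelL A (l' ++ [x]) x u then ω u else 0)).sum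
      = ∑ u ∈ Finset.univ.erase x, (if Cfull A x u then ω u else 0) := by
    rw [← hl'fin, List.sum_toFinset _ hl'nodup]
    apply mapsum_congr
    intro u _
    by_cases h : Cfull A x u
    · rw [if_pos ((hcre u).2 h), if_pos h]
    · rw [if_neg (fun hc => h ((hcre u).1 hc)), if_neg h]
  rw [hs1, hs2] at hkey
  have hwgg : ∀ u, ω u * gg A x u
      = (if A x u then ω u else 0) - (if A u x then ω u else 0) := by
    intro u; unfold gg; split_ifs <;> ring
  have hS1 : ∑ u ∈ Finset.univ.erase x, ω u * gg A x u
      = (∑ u ∈ Finset.univ.filter (fun u => A x u), ω u)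
        - (∑ u ∈ Finset.univ.filter (fun u => A u x), ω u) := by
    rw [Finset.sum_congr rfl (fun u _ => hwgg u), Finset.sum_sub_distrib]
    rw [Finset.sum_erase_eq_sub (Finset.mem_univ x), Finset.sum_erase_eq_sub (Finset.mem_univ x)]
    rw [if_pos (hA x), ← Finset.sum_filter, ← Finset.sum_filter]
    ring
  have hS2 : ∑ u ∈ Finset.univ.erase x, (if Cfull A x u then ω u else 0)
      = ∑ u ∈ Finset.univ.filter (fun w => Cfull A x w), ω u := by
    have h0 : (fun u => if Cfull A x u then ω u else 0) x = 0 := by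
      simp only []; rw [if_neg]; intro hc; exact hc.1 (hA x)
    rw [Finset.sum_erase (s := (Finset.univ : Finset V))
      (f := fun u => if Cfull A x u then ω u else 0) (a := x) h0, Finset.sum_filter]
  rw [hS1, hS2] at hkey
  exact ⟨x, by linarith⟩

lemma mainIneq [Nonempty V] (A : V → V → Prop) (hA : ∀ v, A v v) (ω : V → ℝ)
    (hω : ∀ v, 0 ≤ ω v) :
    ∃ x : V, (∑ u ∈ Finset.univ.filter (fun u => A x u), ω u)
        + (∑ u ∈ Finset.univ.filter (fun w => Cfull A x w), ω u)
      ≤ ∑ u ∈ Finset.univ.filter (fun u => A u x), ω u := by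
  classical
  by_contra hcon
  push_neg at hcon
  set F : V → ℝ := fun x =>
    ((∑ u ∈ Finset.univ.filter (fun u => A x u), ω u)
      + (∑ u ∈ Finset.univ.filter (fun w => Cfull A x w), ω u))
      - ∑ u ∈ Finset.univ.filter (fun u => A u x), ω u with hF
  have hFpos : ∀ x, 0 < F x := fun x => by
    have := hcon x
    simp only [hF]
    linarith
  obtain ⟨x₀, -, hx₀⟩ := Finset.exists_min_image Finset.univ F
    ⟨Classical.arbitrary V, Finset.mem_univ _⟩
  set n : ℕ := Fintype.card V with hn
  set ε : ℝ := F x₀ / (2 * (n + 1)) with hε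
  have hεpos : 0 < ε := by
    apply div_pos (hFpos x₀)
    positivity
  obtain ⟨x, hx⟩ := posCase A hA (fun v => ω v + ε)
    (fun v => add_pos_of_nonneg_of_pos (hω v) hεpos)
  have hsum : ∀ (S : Finset V), (∑ u ∈ S, (ω u + ε)) = (∑ u ∈ S, ω u) + S.card * ε := by
    intro S
    rw [Finset.sum_add_distrib, Finset.sum_const, nsmul_eq_mul]
  rw [hsum, hsum, hsum] at hx
  have hcard : ∀ p : V → Prop, ((Finset.univ.filter p).card : ℝ) ≤ (n : ℝ) := by
    intro p
    have := Finset.card_filter_le Finset.univ p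
    rw [Finset.card_univ] at this
    exact_mod_cast this
  have hcard0 : ∀ p : V → Prop, (0:ℝ) ≤ ((Finset.univ.filter p).card : ℝ) := fun p => by positivity
  have h1 : F x ≤ ε * n := by
    have ha := hcard (fun u => A u x)
    have hb := hcard0 (fun u => A x u)
    have hc := hcard0 (fun w => Cfull A x w)
    simp only [hF]
    nlinarith [hx, hεpos]
  have h2 : ε * n < F x₀ := by
    rw [hε]
    rw [div_mul_eq_mul_div, div_lt_iff₀ (by positivity : (0:ℝ) < 2 * ((n:ℝ) + 1))]
    nlinarith [hFpos x₀]
  have := hx₀ x (Finset.mem_univ x)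
  linarith

end SNCAux

theorem generalized_tournament_snc'
    {V : Type} [Fintype V] [Nonempty V] (A B : V → V → Prop)
    (h1 : ∀ u v, (A u v ∧ B v u) ↔ u = v)
    (h2 : ∀ u v, A u v ∨ B v u)
    (ω : V → ℝ) (hω : ∀ v, 0 ≤ ω v) :
    ∃ v, (∑ u ∈ Finset.univ.filter (fun w => rprod A B v w ∨ rprod B A v w), ω u) ≥
      (∑ u ∈ Finset.univ.filter (fun u => A v u), ω u)
      + (∑ u ∈ Finset.univ.filter (fun u => B v u), ω u) - ω v := by
  classical
  have hAr : ∀ v, A v v := fun v => ((h1 v v).mpr rfl).1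
  have hBr : ∀ v, B v v := fun v => ((h1 v v).mpr rfl).2
  have hB : ∀ u v, B v u ↔ (u = v ∨ ¬ A u v) := by
    intro u v
    constructor
    · intro hb
      by_cases h : u = v
      · exact Or.inl h
      · exact Or.inr (fun ha => h ((h1 u v).mp ⟨ha, hb⟩))
    · rintro (rfl | hna)
      · exact hBr u
      · rcases h2 u v with ha | hb
        · exact absurd ha hna
        · exact hb
  obtain ⟨x, hx⟩ := SNCAux.mainIneq A hAr ω hω
  refine ⟨x, ?_⟩
  have hRiff : ∀ w, (¬ (rprod A B x w ∨ rprod B A x w)) ↔ SNCAux.Cfull A x w := by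
    intro w
    constructor
    · intro hn
      push_neg at hn
      obtain ⟨hn1, hn2⟩ := hn
      refine ⟨?_, ?_, ?_⟩
      · intro haxw
        exact hn1 ⟨w, haxw, (hB w w).mpr (Or.inl rfl)⟩
      · intro u haxu
        by_contra hnawu
        exact hn1 ⟨u, haxu, (hB w u).mpr (Or.inr hnawu)⟩
      · intro u hauw
        by_contra hnaux
        exact hn2 ⟨u, (hB u x).mpr (Or.inr hnaux), hauw⟩
    · rintro ⟨hc1, hc2, hc3⟩ hr
      rcases hr with ⟨u, haxu, hbuw⟩ | ⟨u, hbxu, hauw⟩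
      · rcases (hB w u).mp hbuw with rfl | hnawu
        · exact hc1 haxu
        · exact hnawu (hc2 u haxu)
      · rcases (hB u x).mp hbxu with rfl | hnaux
        · exact hc1 hauw
        · exact hnaux (hc3 u hauw)
  have hpart : (∑ u ∈ Finset.univ.filter (fun w => rprod A B x w ∨ rprod B A x w), ω u)
      + (∑ u ∈ Finset.univ.filter (fun w => SNCAux.Cfull A x w), ω u)
      = ∑ u ∈ Finset.univ, ω u := by
    rw [show Finset.univ.filter (fun w => SNCAux.Cfull A x w)
        = Finset.univ.filter (fun w => ¬ (rprod A B x w ∨ rprod B A x w)) from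
      Finset.filter_congr (fun w _ => (hRiff w).symm)]
    exact Finset.sum_filter_add_sum_filter_not _ _ _
  have hB1 : Finset.univ.filter (fun u => B x u)
      = Finset.univ.filter (fun u => u = x ∨ ¬ A u x) :=
    Finset.filter_congr (fun u _ => hB u x)
  have hB2 : (∑ u ∈ Finset.univ.filter (fun u => u = x ∨ ¬ A u x), ω u)
      + (∑ u ∈ Finset.univ.filter (fun u => ¬(u = x ∨ ¬ A u x)), ω u)
      = ∑ u ∈ Finset.univ, ω u :=
    Finset.sum_filter_add_sum_filter_not _ _ _
  have hB3 : Finset.univ.filter (fun u => ¬(u = x ∨ ¬ A u x))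
      = (Finset.univ.filter (fun u => A u x)).erase x := by
    ext u
    simp only [Finset.mem_filter, Finset.mem_erase, Finset.mem_univ, true_and]
    tauto
  have hB4 : ∑ u ∈ (Finset.univ.filter (fun u => A u x)).erase x, ω u
      = (∑ u ∈ Finset.univ.filter (fun u => A u x), ω u) - ω x :=
    Finset.sum_erase_eq_sub (by simp [hAr x])
  rw [hB1]
  rw [hB3, hB4] at hB2
  linarith

/-- Main theorem (tournament case of the generalised conjecture): if `A ∩ Bᵀ = I` and
`A ∪ Bᵀ = V × V`, then for every non-negative weight `ω` some vertex `v` satisfies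
`ω((AB ∪ BA)(v)) ≥ ω(A(v)) + ω(B(v)) − ω(v)`. -/
theorem generalized_tournament_snc
    {V : Type} [Fintype V] [Nonempty V] (A B : V → V → Prop)
    (h1 : ∀ u v, (A u v ∧ B v u) ↔ u = v)
    (h2 : ∀ u v, A u v ∨ B v u)
    (ω : V → ℝ) (hω : ∀ v, 0 ≤ ω v) :
    ∃ v, wt ω (outs (fun u w => rprod A B u w ∨ rprod B A u w) v) ≥
      wt ω (outs A v) + wt ω (outs B v) - ω v := by
  obtain ⟨v, hv⟩ := generalized_tournament_snc' A B h1 h2 ω hω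
  refine ⟨v, ?_⟩
  simp only [wt, outs, ge_iff_le] at hv ⊢
  convert hv using 3
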